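/- Let v_1,...,v_q ∈ ℕ^n be the columns of a nonnegative integer matrix A and let Q = {x ∈ ℝ^n : x ≥ 0, xA ≥ 1}. Then the blocking polyhedron B(Q) = {z ≥ 0 : ⟨z,x⟩ ≥ 1 for all x ∈ Q} equals ℝ₊^n + conv(v_1,...,v_q). -/

import Mathlib

open Pointwise

/-- The blocking polyhedron of a set `Q ⊆ ℝⁿ`. -/
def blocker {n : ℕ} (Q : Set (Fin n → ℝ)) : Set (Fin n → ℝ) :=
  {z | (∀ i, 0 ≤ z i) ∧ ∀ x ∈ Q, 1 ≤ ∑ i, z i * x i}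

lemma blocker_convex {n : ℕ} (Q : Set (Fin n → ℝ)) : Convex ℝ (blocker Q) := by
  intro z1 h1 z2 h2 a b ha hb hab
  refine ⟨fun i => ?_, fun x hx => ?_⟩
  · have g1 := h1.1 i; have g2 := h2.1 i
    simp only [Pi.add_apply, Pi.smul_apply, smul_eq_mul]
    positivity
  · have e : ∀ i ∈ Finset.univ, (a • z1 + b • z2) i * x i
        = a * (z1 i * x i) + b * (z2 i * x i) := by
      intro i _
      simp only [Pi.add_apply, Pi.smul_apply, smul_eq_mul]; ring
    rw [Finset.sum_congr rfl e, Finset.sum_add_distrib, ← Finset.mul_sum, ← Finset.mul_sum]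
    have t1 := mul_le_mul_of_nonneg_left (h1.2 x hx) ha
    have t2 := mul_le_mul_of_nonneg_left (h2.2 x hx) hb
    nlinarith

/-- for a nonnegative integer matrix `A` with columns `v₁,…,v_q`, the blocking
polyhedron of the covering polyhedron `Q = {x ≥ 0 : xA ≥ 1}` equals
`ℝ₊ⁿ + conv(v₁,…,v_q)` (Minkowski sum). -/
theorem stmt2 (n q : ℕ) (A : Matrix (Fin n) (Fin q) ℕ) :
    blocker {x : Fin n → ℝ | (∀ i, 0 ≤ x i) ∧ ∀ j, 1 ≤ ∑ i, x i * (A i j : ℝ)} =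
      {x : Fin n → ℝ | ∀ i, 0 ≤ x i} +
        convexHull ℝ {x : Fin n → ℝ | ∃ j, x = fun i => (A i j : ℝ)} := by
  set Q : Set (Fin n → ℝ) :=
    {x : Fin n → ℝ | (∀ i, 0 ≤ x i) ∧ ∀ j, 1 ≤ ∑ i, x i * (A i j : ℝ)} with hQdef
  set V : Set (Fin n → ℝ) := {x : Fin n → ℝ | ∃ j, x = fun i => (A i j : ℝ)} with hVdef
  have hVrange : V = Set.range (fun j : Fin q => fun i => (A i j : ℝ)) := by
    ext x; simp [hVdef, Set.range, eq_comm]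
  have hVblocker : convexHull ℝ V ⊆ blocker Q := by
    apply convexHull_min _ (blocker_convex Q)
    rintro _ ⟨j, rfl⟩
    refine ⟨fun i => by positivity, fun x hx => ?_⟩
    have := hx.2 j
    calc (1:ℝ) ≤ ∑ i, x i * (A i j : ℝ) := this
      _ = ∑ i, (A i j : ℝ) * x i := by simp [mul_comm]
  apply Set.Subset.antisymm
  · -- hard direction
    intro z hz
    obtain ⟨hz0, hz1⟩ := hz
    by_contra hzD
    -- the set D is convex and closed
    have hVfin : V.Finite := by rw [hVrange]; exact Set.finite_range _
    have hScl : IsClosed {x : Fin n → ℝ | ∀ i, 0 ≤ x i} := by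
      have : {x : Fin n → ℝ | ∀ i, 0 ≤ x i} = ⋂ i, {x : Fin n → ℝ | 0 ≤ x i} := by
        ext x; simp
      rw [this]
      exact isClosed_iInter fun i => isClosed_le continuous_const (continuous_apply i)
    have hSconv : Convex ℝ {x : Fin n → ℝ | ∀ i, 0 ≤ x i} := by
      intro x hx y hy a b ha hb hab i
      have := hx i; have := hy i
      simp only [Pi.add_apply, Pi.smul_apply, smul_eq_mul]
      positivity
    have hDcl : IsClosed ({x : Fin n → ℝ | ∀ i, 0 ≤ x i} + convexHull ℝ V) :=
      hScl.add_right_of_isCompact (hVfin.isCompact_convexHull (𝕜 := ℝ))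
    have hDconv : Convex ℝ ({x : Fin n → ℝ | ∀ i, 0 ≤ x i} + convexHull ℝ V) :=
      hSconv.add (convex_convexHull ℝ V)
    obtain ⟨f, u, hfu, hfD⟩ := geometric_hahn_banach_point_closed hDconv hDcl hzD
    set xv : Fin n → ℝ := fun i => f (fun j => if i = j then 1 else 0) with hxv
    have hfeq : ∀ y : Fin n → ℝ, f y = ∑ i, y i * xv i := by
      intro y
      have := LinearMap.pi_apply_eq_sum_univ (f : (Fin n → ℝ) →ₗ[ℝ] ℝ) y
      simpa [smul_eq_mul] using this
    -- Q is empty only if q = 0; handle q = 0 first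
    rcases Nat.eq_zero_or_pos q with hq | hq
    · subst hq
      have h0Q : (0 : Fin n → ℝ) ∈ Q := ⟨fun i => le_refl 0, fun j => Fin.elim0 j⟩
      have := hz1 0 h0Q
      simp only [Pi.zero_apply, mul_zero, Finset.sum_const_zero] at this
      linarith
    · have : Nonempty (Fin q) := ⟨⟨0, hq⟩⟩
      -- pick a column c₀ ∈ conv V
      set c₀ : Fin n → ℝ := fun i => (A i (Classical.arbitrary (Fin q)) : ℝ) with hc₀
      have hc₀V : c₀ ∈ convexHull ℝ V := subset_convexHull ℝ V ⟨_, rfl⟩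
      have hmemD : ∀ w ∈ {x : Fin n → ℝ | ∀ i, 0 ≤ x i}, ∀ c ∈ convexHull ℝ V,
          u < f (w + c) := by
        intro w hw c hc
        exact hfD _ (Set.add_mem_add hw hc)
      -- xv is nonneg
      have hxv0 : ∀ i, 0 ≤ xv i := by
        intro i
        by_contra hneg
        push_neg at hneg
        set t : ℝ := (f c₀ - u) / (-xv i) + 1 with ht
        have ht0 : 0 ≤ t := by
          have h1 : u < f c₀ := by
            have := hmemD 0 (fun i => le_refl 0) c₀ hc₀V
            simpa using this
          have : 0 ≤ (f c₀ - u) / (-xv i) := by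
            apply div_nonneg (by linarith) (by linarith)
          rw [ht]; linarith
        have hwmem : (t • fun j => if i = j then (1:ℝ) else 0) ∈
            {x : Fin n → ℝ | ∀ i, 0 ≤ x i} := by
          intro k
          simp only [Pi.smul_apply, smul_eq_mul]
          by_cases h : i = k <;> simp [h, ht0]
        have hlt := hmemD _ hwmem c₀ hc₀V
        rw [map_add, map_smul, smul_eq_mul] at hlt
        have hfe : f (fun j => if i = j then (1:ℝ) else 0) = xv i := rfl
        rw [hfe] at hlt
        have hne : xv i ≠ 0 := ne_of_lt hneg
        have : t * xv i = -(f c₀ - u) + xv i := by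
          rw [ht, div_neg, add_mul, neg_mul, div_mul_cancel₀ _ hne, one_mul]
        rw [this] at hlt
        linarith
      -- f z ≥ 0, so u > 0
      have hfz0 : 0 ≤ f z := by
        rw [hfeq]
        exact Finset.sum_nonneg fun i _ => mul_nonneg (hz0 i) (hxv0 i)
      have hu0 : 0 < u := lt_of_le_of_lt hfz0 hfu
      -- the scaled point x' := u⁻¹ • xv lies in Q
      have hxQ : (fun i => xv i / u) ∈ Q := by
        refine ⟨fun i => div_nonneg (hxv0 i) hu0.le, fun j => ?_⟩
        have hcol : u < f (fun i => (A i j : ℝ)) := by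
          have := hmemD 0 (fun i => le_refl 0) _ (subset_convexHull ℝ V ⟨j, rfl⟩)
          simpa using this
        rw [hfeq] at hcol
        have : ∑ i, (xv i / u) * (A i j : ℝ) = (∑ i, (A i j : ℝ) * xv i) / u := by
          rw [Finset.sum_div]
          exact Finset.sum_congr rfl fun i _ => by ring
        rw [this, le_div_iff₀ hu0, one_mul]
        exact hcol.le
      have := hz1 _ hxQ
      have hsum : ∑ i, z i * (xv i / u) = f z / u := by
        rw [hfeq, Finset.sum_div]
        exact Finset.sum_congr rfl fun i _ => by ring
      rw [hsum] at this
      rw [le_div_iff₀ hu0] at this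
      linarith
  · -- easy direction
    rintro z ⟨w, hw, c, hc, rfl⟩
    have hcB := hVblocker hc
    refine ⟨fun i => add_nonneg (hw i) (hcB.1 i), fun x hx => ?_⟩
    have : ∑ i, (w + c) i * x i = ∑ i, w i * x i + ∑ i, c i * x i := by
      rw [← Finset.sum_add_distrib]
      exact Finset.sum_congr rfl fun i _ => by simp [add_mul]
    rw [this]
    have h1 : 0 ≤ ∑ i, w i * x i :=
      Finset.sum_nonneg fun i _ => mul_nonneg (hw i) (hx.1 i)
    have h2 := hcB.2 x hx
    linarith
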